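/- Assume the convictions are ordered, θ_1 ≤ θ_2 ≤ … ≤ θ_N, let y be a Nash equilibrium and set ȳ = (1/M) Σ_{k=1}^N m_k y_k. Then there exists an index 1 ≤ i₀ ≤ N such that θ_i ≤ y_i^p and y_i ≤ ȳ for all i ≤ i₀, while y_i^p ≤ θ_i and ȳ ≤ y_i for all i > i₀. In other words, for each i one has y_i ≤ ȳ if and only if θ_i ≤ y_i^p, and ȳ ≤ y_i if and only if y_i^p ≤ θ_i. -/
import Mathlib


open Filter Topology Finset Real

/-- Shift structure of the Nash equilibrium relative to the average opinion
`ȳ = (1/M) Σ_k m_k y_k`: there is a threshold index `i₀` such that for `i ≤ i₀` one has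
`θ_i ≤ y_i^p` and `y_i ≤ ȳ`, while for `i > i₀` one has `y_i^p ≤ θ_i` and `ȳ ≤ y_i`;
moreover for each `i`, `y_i ≤ ȳ ↔ θ_i ≤ y_i^p` and `ȳ ≤ y_i ↔ y_i^p ≤ θ_i`. -/
theorem nash_equilibrium_shift_structure
    {N : ℕ} (hN : 0 < N)
    (m θ : Fin N → ℝ) (hm : ∀ i, 0 < m i) (hθ : ∀ i, 0 < θ i)
    (hmono : Monotone θ)
    {σ p : ℝ} (hσ : 0 < σ) (hp : 0 < p)
    (y : Fin N → ℝ) (hpos : ∀ i, 0 < y i)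
    (heq : ∀ i, ∑ k, m k * (y k - y i) + σ * (θ i - y i ^ p) * y i = 0) :
    (∃ i₀ : Fin N,
      (∀ i ≤ i₀, θ i ≤ y i ^ p ∧ y i ≤ (∑ k, m k * y k) / (∑ k, m k)) ∧
      (∀ i, i₀ < i → y i ^ p ≤ θ i ∧ (∑ k, m k * y k) / (∑ k, m k) ≤ y i)) ∧
    (∀ i, (y i ≤ (∑ k, m k * y k) / (∑ k, m k) ↔ θ i ≤ y i ^ p) ∧
      ((∑ k, m k * y k) / (∑ k, m k) ≤ y i ↔ y i ^ p ≤ θ i)) := by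
  haveI : Nonempty (Fin N) := Fin.pos_iff_nonempty.mp hN
  set M := ∑ k, m k with hM
  set S := ∑ k, m k * y k with hS
  have hMpos : 0 < M := Finset.sum_pos (fun i _ => hm i) Finset.univ_nonempty
  have key : ∀ i, S - M * y i = σ * (y i ^ p - θ i) * y i := by
    intro i
    have h1 : ∑ k, m k * (y k - y i) = S - M * y i := by
      rw [hS, hM, Finset.sum_mul, ← Finset.sum_sub_distrib]
      exact Finset.sum_congr rfl fun k _ => by ring
    have := heq i
    rw [h1] at this
    nlinarith [this]
  have iff1 : ∀ i, y i ≤ S / M ↔ θ i ≤ y i ^ p := by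
    intro i
    rw [le_div_iff₀ hMpos]
    constructor <;> intro h <;>
      nlinarith [key i, hpos i, mul_pos hσ (hpos i)]
  have iff2 : ∀ i, S / M ≤ y i ↔ y i ^ p ≤ θ i := by
    intro i
    rw [div_le_iff₀ hMpos]
    constructor <;> intro h <;>
      nlinarith [key i, hpos i, mul_pos hσ (hpos i)]
  have hex : ∃ i, θ i ≤ y i ^ p := by
    by_contra h
    push_neg at h
    have hlt : ∀ i, S / M < y i := by
      intro i
      by_contra hle
      push_neg at hle
      exact absurd ((iff1 i).mp hle) (not_le.mpr (h i))
    have hSS : S < S := by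
      calc S = ∑ k : Fin N, m k * (S / M) := by
              rw [← Finset.sum_mul, ← hM]; field_simp
        _ < ∑ k, m k * y k :=
            Finset.sum_lt_sum_of_nonempty Finset.univ_nonempty
              (fun i _ => mul_lt_mul_of_pos_left (hlt i) (hm i))
        _ = S := rfl
    exact lt_irrefl _ hSS
  have seg : ∀ i j : Fin N, j ≤ i → θ i ≤ y i ^ p → θ j ≤ y j ^ p := by
    intro i j hji hi
    by_contra hj
    push_neg at hj
    have h1 : S / M < y j := by
      by_contra hle
      push_neg at hle
      exact absurd ((iff1 j).mp hle) (not_le.mpr hj)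
    have h2 : y i ≤ S / M := (iff1 i).mpr hi
    have h3 : y i < y j := lt_of_le_of_lt h2 h1
    have h4 : y i ^ p < y j ^ p := Real.rpow_lt_rpow (le_of_lt (hpos i)) h3 hp
    have h5 : θ j ≤ θ i := hmono hji
    linarith
  refine ⟨?_, fun i => ⟨iff1 i, iff2 i⟩⟩
  set T := Finset.univ.filter (fun i => θ i ≤ y i ^ p) with hT
  have hTne : T.Nonempty := by
    obtain ⟨i, hi⟩ := hex
    exact ⟨i, by simp [hT, hi]⟩
  refine ⟨T.max' hTne, ?_, ?_⟩
  · intro i hi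
    have hmax : θ (T.max' hTne) ≤ y (T.max' hTne) ^ p := by
      have := T.max'_mem hTne
      simpa [hT] using this
    have h1 : θ i ≤ y i ^ p := seg _ _ hi hmax
    exact ⟨h1, (iff1 i).mpr h1⟩
  · intro i hi
    have hnot : ¬ θ i ≤ y i ^ p := by
      intro h
      have : i ∈ T := by simp [hT, h]
      exact absurd (T.le_max' i this) (not_le.mpr hi)
    push_neg at hnot
    exact ⟨le_of_lt hnot, (iff2 i).mpr (le_of_lt hnot)⟩
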